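/- Let B1 and B2 be two disjoint bases of a matroid M, and let C be a chordless directed cycle in the exchange graph D(B1,B2). Then V(C) is an exchangeable set for B1 and B2, i.e., B1 Δ V(C) and B2 Δ V(C) are both bases. -/

import Mathlib

open Set

variable {α : Type*}

/-- Edge relation of the exchange graph `D(B1,B2)`: there is an edge `(x,y)` from
`x ∈ B_i` to `y ∈ B_j` (`i ≠ j`) whenever `B_i - x + y` is a basis. -/
def ExchEdge (M : Matroid α) (B1 B2 : Set α) (x y : α) : Prop :=
  (x ∈ B1 ∧ y ∈ B2 ∧ M.IsBase (insert y (B1 \ {x}))) ∨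
  (x ∈ B2 ∧ y ∈ B1 ∧ M.IsBase (insert y (B2 \ {x})))

/-- A directed cycle with respect to an edge relation `R`, given as a nonempty
list of pairwise distinct vertices, cyclically consecutive vertices joined by edges. -/
def IsCycle (R : α → α → Prop) (l : List α) : Prop :=
  l ≠ [] ∧ l.Nodup ∧ l.Chain' R ∧ ∀ h : l ≠ [], R (l.getLast h) (l.head h)

/-- `x, y` are cyclically consecutive in the list `l` (i.e. `(x,y)` is an edge of the cycle). -/
def CycEdge (l : List α) (x y : α) : Prop :=
  ∃ i : ℕ, i < l.length ∧ l[i]? = some x ∧ l[(i + 1) % l.length]? = some y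

lemma exch_notMem_closure {M : Matroid α} {B : Set α} {x y : α} (hB : M.IsBase B) (hx : x ∈ B)
    (h : M.IsBase (insert y (B \ {x}))) : y ∉ M.closure (B \ {x}) := by
  intro hy
  have hcl : M.closure (B \ {x}) = M.E := by
    rw [← Matroid.closure_insert_eq_of_mem_closure hy, h.closure_eq]
  have hbase : M.IsBase (B \ {x}) :=
    (hB.indep.subset diff_subset).isBase_of_ground_subset_closure hcl.symm.subset
  have heq := hbase.eq_of_subset_isBase hB diff_subset
  have : x ∈ B \ {x} := heq.symm ▸ hx
  exact this.2 rfl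

lemma exch_mem_closure {M : Matroid α} {B : Set α} {x y : α} (hB : M.IsBase B) (hx : x ∈ B)
    (hyE : y ∈ M.E) (hyB : y ∉ B) (hnb : ¬ M.IsBase (insert y (B \ {x}))) :
    y ∈ M.closure (B \ {x}) := by
  by_contra h
  apply hnb
  have hyB' : y ∈ M.closure (insert x (B \ {x})) := by
    rw [Set.insert_diff_singleton, Set.insert_eq_of_mem hx, hB.closure_eq]; exact hyE
  have hx' : x ∈ M.closure (insert y (B \ {x})) := M.mem_closure_insert h hyB'
  have hind : M.Indep (insert y (B \ {x})) := by
    rw [(hB.indep.subset diff_subset).insert_indep_iff_of_notMem (fun hc => hyB hc.1)]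
    exact ⟨hyE, h⟩
  apply hind.isBase_of_ground_subset_closure
  have hBsub : B ⊆ M.closure (insert y (B \ {x})) := by
    intro b hb
    rcases eq_or_ne b x with rfl | hbx
    · exact hx'
    · exact M.subset_closure _ hind.subset_ground (Set.mem_insert_iff.mpr (Or.inr ⟨hb, hbx⟩))
  calc M.E = M.closure B := hB.closure_eq.symm
    _ ⊆ M.closure (M.closure (insert y (B \ {x}))) := M.closure_subset_closure hBsub
    _ = _ := M.closure_closure _

lemma exch_spanning (M : Matroid α) {B X Y : Set α} (hB : M.IsBase B)
    (hXB : X ⊆ B) (hYB : Disjoint Y B) {f : α → α}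
    (hf : ∀ x ∈ X, f x ∈ Y)
    (hsurj : ∀ y ∈ Y, ∃ x ∈ X, f x = y)
    (hinj : ∀ x ∈ X, ∀ x' ∈ X, f x = f x' → x = x')
    (hbase : ∀ x ∈ X, M.IsBase (insert (f x) (B \ {x})))
    (hnon : ∀ x ∈ X, ∀ y ∈ Y, y ≠ f x → ¬ M.IsBase (insert y (B \ {x}))) :
    M.Spanning ((B \ X) ∪ Y) := by
  have hYE : Y ⊆ M.E := by
    intro y hy
    obtain ⟨x, hx, rfl⟩ := hsurj y hy
    exact (hbase x hx).subset_ground (Set.mem_insert _ _)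
  have hSE : (B \ X) ∪ Y ⊆ M.E := Set.union_subset (diff_subset.trans hB.subset_ground) hYE
  rw [Matroid.spanning_iff_ground_subset_closure hSE]
  have hBsub : B ⊆ M.closure ((B \ X) ∪ Y) := by
    intro b hb
    by_cases hbX : b ∈ X
    swap
    · exact M.subset_closure _ hSE (Or.inl ⟨hb, hbX⟩)
    have hyY : f b ∈ Y := hf b hbX
    have hy1 : f b ∉ M.closure (B \ {b}) := exch_notMem_closure hB hb (hbase b hbX)
    have hy2 : f b ∈ M.closure (B \ (X \ {b})) := by
      rcases Set.eq_empty_or_nonempty (X \ {b}) with he | hne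
      · rw [he, Set.diff_empty, hB.closure_eq]; exact hYE hyY
      · have hiUnion : M.Indep (⋃ x' ∈ X \ {b}, (B \ {x'})) :=
          hB.indep.subset (Set.iUnion₂_subset fun x' _ => diff_subset)
        have hEq : (⋂ x' ∈ X \ {b}, (B \ {x'})) = B \ (X \ {b}) := by
          ext a
          simp only [Set.mem_iInter, Set.mem_diff, Set.mem_singleton_iff]
          constructor
          · intro h
            obtain ⟨x0, hx0⟩ := hne
            exact ⟨(h x0 hx0).1, fun ha => (h a ha).2 rfl⟩
          · rintro ⟨haB, haX⟩ x' hx'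
            exact ⟨haB, fun hax => haX (hax ▸ hx')⟩
        rw [← hEq, Matroid.closure_biInter_eq_biInter_closure_of_biUnion_indep hne hiUnion]
        refine Set.mem_iInter₂.mpr fun x' hx' => ?_
        refine exch_mem_closure hB (hXB hx'.1) (hYE hyY)
          (fun hc => hYB.ne_of_mem hyY hc rfl) ?_
        refine hnon x' hx'.1 (f b) hyY (fun heq => hx'.2 ?_)
        rw [hinj x' hx'.1 b hbX heq.symm]; rfl
    have hy3 : f b ∉ M.closure (B \ X) := fun hc =>
      hy1 (M.closure_subset_closure (Set.diff_subset_diff_right (Set.singleton_subset_iff.mpr hbX)) hc)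
    have hy2' : f b ∈ M.closure (insert b (B \ X)) := by
      have hEq2 : B \ (X \ {b}) = insert b (B \ X) := by
        ext a
        simp only [Set.mem_diff, Set.mem_insert_iff, Set.mem_singleton_iff]
        constructor
        · rintro ⟨haB, haX⟩
          rcases eq_or_ne a b with rfl | hab
          · exact Or.inl rfl
          · exact Or.inr ⟨haB, fun h => haX ⟨h, hab⟩⟩
        · rintro (rfl | ⟨haB, haX⟩)
          · exact ⟨hb, fun h => h.2 rfl⟩
          · exact ⟨haB, fun h => haX h.1⟩
      rwa [hEq2] at hy2
    have hbmem : b ∈ M.closure (insert (f b) (B \ X)) := M.mem_closure_insert hy3 hy2'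
    exact M.closure_subset_closure
      (Set.insert_subset (Or.inr hyY) Set.subset_union_left) hbmem
  calc M.E = M.closure B := hB.closure_eq.symm
    _ ⊆ M.closure (M.closure ((B \ X) ∪ Y)) := M.closure_subset_closure hBsub
    _ = _ := M.closure_closure _

lemma compl_exch_eq {E B : Set α} {x y : α} (hBE : B ⊆ E) (hx : x ∈ B) (hyE : y ∈ E)
    (hyB : y ∉ B) : E \ insert y (B \ {x}) = insert x ((E \ B) \ {y}) := by
  ext a
  simp only [Set.mem_diff, Set.mem_insert_iff, Set.mem_singleton_iff]
  constructor
  · rintro ⟨haE, hn⟩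
    push_neg at hn
    by_cases haB : a ∈ B
    · exact Or.inl (hn.2 haB)
    · exact Or.inr ⟨⟨haE, haB⟩, hn.1⟩
  · rintro (rfl | ⟨⟨haE, haB⟩, hay⟩)
    · refine ⟨hBE hx, ?_⟩
      push_neg
      exact ⟨fun h => hyB (h ▸ hx), fun _ => rfl⟩
    · refine ⟨haE, ?_⟩
      push_neg
      exact ⟨hay, fun h => absurd h haB⟩

lemma compl_exch_set_eq {E B X Y : Set α} (hBE : B ⊆ E) (hXB : X ⊆ B) (hYB : Disjoint Y B) :
    E \ ((B \ X) ∪ Y) = ((E \ B) \ Y) ∪ X := by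
  ext a
  simp only [Set.mem_diff, Set.mem_union]
  constructor
  · rintro ⟨haE, hn⟩
    push_neg at hn
    by_cases haB : a ∈ B
    · exact Or.inr (hn.1 haB)
    · exact Or.inl ⟨⟨haE, haB⟩, hn.2⟩
  · rintro (⟨⟨haE, haB⟩, haY⟩ | haX)
    · refine ⟨haE, ?_⟩
      push_neg
      exact ⟨fun h => absurd h haB, haY⟩
    · refine ⟨hBE (hXB haX), ?_⟩
      push_neg
      exact ⟨fun _ => haX, fun h => (hYB.ne_of_mem h (hXB haX)) rfl⟩

lemma exch_base (M : Matroid α) {B X Y : Set α} (hB : M.IsBase B)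
    (hXB : X ⊆ B) (hYB : Disjoint Y B) {f : α → α}
    (hf : ∀ x ∈ X, f x ∈ Y)
    (hsurj : ∀ y ∈ Y, ∃ x ∈ X, f x = y)
    (hinj : ∀ x ∈ X, ∀ x' ∈ X, f x = f x' → x = x')
    (hbase : ∀ x ∈ X, M.IsBase (insert (f x) (B \ {x})))
    (hnon : ∀ x ∈ X, ∀ y ∈ Y, y ≠ f x → ¬ M.IsBase (insert y (B \ {x}))) :
    M.IsBase ((B \ X) ∪ Y) := by
  classical
  have hYE : Y ⊆ M.E := by
    intro y hy
    obtain ⟨x, hx, rfl⟩ := hsurj y hy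
    exact (hbase x hx).subset_ground (Set.mem_insert _ _)
  have hBE : B ⊆ M.E := hB.subset_ground
  have hsp : M.Spanning ((B \ X) ∪ Y) := exch_spanning M hB hXB hYB hf hsurj hinj hbase hnon
  -- inverse function
  have hex : ∀ y, ∃ x, y ∈ Y → (x ∈ X ∧ f x = y) := by
    intro y
    by_cases hy : y ∈ Y
    · obtain ⟨x, hx, hfx⟩ := hsurj y hy; exact ⟨x, fun _ => ⟨hx, hfx⟩⟩
    · exact ⟨y, fun h => absurd h hy⟩
  choose g hg using hex
  have hgf : ∀ x ∈ X, g (f x) = x := fun x hx =>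
    hinj _ (hg _ (hf x hx)).1 x hx (hg _ (hf x hx)).2
  have hYnB : ∀ y ∈ Y, y ∉ B := fun y hy hc => (hYB.ne_of_mem hy hc) rfl
  -- dual spanning
  have hcompl : ∀ x ∈ X, ∀ y ∈ Y,
      M.E \ insert x ((M.E \ B) \ {y}) = insert y (B \ {x}) := by
    intro x hx y hy
    have := compl_exch_eq (B := M.E \ B) (E := M.E) diff_subset
      ⟨hYE hy, hYnB y hy⟩ (hBE (hXB hx)) (fun hc => hc.2 (hXB hx))
    rw [this, Set.diff_diff_cancel_left hBE]
  have hspd : M✶.Spanning (((M.E \ B) \ Y) ∪ X) := by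
    refine exch_spanning M✶ hB.compl_isBase_dual
      (fun y hy => ⟨hYE hy, hYnB y hy⟩)
      (Set.disjoint_left.mpr fun a haX ha => ha.2 (hXB haX)) (f := g)
      (fun y hy => (hg y hy).1)
      (fun x hx => ⟨f x, hf x hx, hgf x hx⟩)
      (fun y hy y' hy' h => by rw [← (hg y hy).2, ← (hg y' hy').2, h])
      (fun y hy => ?_) (fun y hy x hx hxg => ?_)
    · rw [Matroid.dual_isBase_iff (by
        refine Set.insert_subset (hBE (hXB (hg y hy).1)) ((diff_subset.trans diff_subset)))]
      rw [hcompl _ (hg y hy).1 y hy]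
      have := hbase _ (hg y hy).1
      rwa [(hg y hy).2] at this
    · rw [Matroid.dual_isBase_iff (by
        refine Set.insert_subset (hBE (hXB hx)) ((diff_subset.trans diff_subset)))]
      rw [hcompl _ hx y hy]
      refine hnon x hx y hy (fun heq => hxg ?_)
      rw [heq, hgf x hx]
  -- independence
  have hind : M.Indep ((B \ X) ∪ Y) := by
    rw [← Matroid.dual_coindep_iff]
    have hsub : (B \ X) ∪ Y ⊆ M✶.E := by
      rw [Matroid.dual_ground]
      exact Set.union_subset (diff_subset.trans hBE) hYE
    rw [Matroid.coindep_iff_compl_spanning hsub]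
    have : M✶.E \ ((B \ X) ∪ Y) = ((M.E \ B) \ Y) ∪ X := by
      rw [Matroid.dual_ground]
      exact compl_exch_set_eq hBE hXB hYB
    rwa [this]
  exact hsp.isBase_of_indep hind

lemma exch_mod_succ_inj {n i j : ℕ} (hi : i < n) (hj : j < n)
    (h : (i + 1) % n = (j + 1) % n) : i = j := by
  have key : ∀ k, k < n → ((k + 1) % n + (n - 1)) % n = k := by
    intro k hk
    rw [Nat.mod_add_mod]
    have h2 : k + 1 + (n - 1) = k + n := by omega
    rw [h2, Nat.add_mod_right, Nat.mod_eq_of_lt hk]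
  rw [← key i hi, ← key j hj, h]


/-- If `B1, B2` are disjoint bases and `C` is a chordless cycle in the exchange graph
`D(B1,B2)`, then `V(C)` is an exchangeable set for `B1` and `B2`. -/
theorem chordless_cycle_exchangeable (M : Matroid α) (B1 B2 : Set α)
    (hB1 : M.IsBase B1) (hB2 : M.IsBase B2) (hdisj : Disjoint B1 B2)
    (l : List α) (hcyc : IsCycle (ExchEdge M B1 B2) l)
    (hchordless : ∀ x ∈ l, ∀ y ∈ l, ExchEdge M B1 B2 x y → CycEdge l x y) :
    M.IsBase (symmDiff B1 {x | x ∈ l}) ∧ M.IsBase (symmDiff B2 {x | x ∈ l}) := by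
  classical
  obtain ⟨hne, hnodup, hchain, hlast⟩ := hcyc
  have hn0 : 0 < l.length := List.length_pos_iff.mpr hne
  have hinjget : Function.Injective l.get := List.nodup_iff_injective_get.mp hnodup
  have hmodlt : ∀ i : ℕ, (i + 1) % l.length < l.length := fun i => Nat.mod_lt _ hn0
  set f : α → α := fun x => l.get ⟨(l.idxOf x + 1) % l.length, hmodlt _⟩ with hf_def
  have hidx : ∀ x ∈ l, l.idxOf x < l.length := fun x hx => List.idxOf_lt_length_iff.mpr hx
  have hgetidx : ∀ i : Fin l.length, l.idxOf (l.get i) = i.1 := by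
    intro i
    have h1 : l.get ⟨l.idxOf (l.get i), hidx _ (List.get_mem l i)⟩ = l.get i := List.idxOf_get _
    exact congrArg Fin.val (hinjget h1)
  -- consecutive edges, cyclically
  have hedge : ∀ i : Fin l.length,
      ExchEdge M B1 B2 (l.get i) (l.get ⟨(i.1 + 1) % l.length, hmodlt _⟩) := by
    rintro ⟨i, hi⟩
    rcases Nat.lt_or_ge (i + 1) l.length with h1 | h1
    · have hm : (i + 1) % l.length = i + 1 := Nat.mod_eq_of_lt h1
      have := List.isChain_iff_getElem.mp hchain i (by omega)
      simp only [hm]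
      convert this using 2 <;> rfl
    · have hieq : i = l.length - 1 := by omega
      have hm : (i + 1) % l.length = 0 := by
        have : i + 1 = l.length := by omega
        rw [this, Nat.mod_self]
      have hlast' := hlast hne
      rw [List.getLast_eq_getElem, List.head_eq_getElem] at hlast'
      simp only [hm, List.get_eq_getElem]
      convert hlast' using 2
  have hmeml : ∀ x ∈ l, f x ∈ l := fun x _ => List.get_mem l _
  have hedgef : ∀ x ∈ l, ExchEdge M B1 B2 x (f x) := by
    intro x hx
    have h := hedge ⟨l.idxOf x, hidx x hx⟩
    rw [List.idxOf_get] at h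
    exact h
  have hfinj : ∀ x ∈ l, ∀ x' ∈ l, f x = f x' → x = x' := by
    intro x hx x' hx' h
    rw [hf_def] at h
    simp only at h
    have h2 := congrArg Fin.val (hinjget h)
    have h3 := exch_mod_succ_inj (hidx x hx) (hidx x' hx') h2
    have hxx : x = l.get ⟨l.idxOf x, hidx x hx⟩ := (List.idxOf_get _).symm
    have hx'x : x' = l.get ⟨l.idxOf x', hidx x' hx'⟩ := (List.idxOf_get _).symm
    rw [hxx, hx'x]
    exact congrArg l.get (Fin.ext h3)
  have hcycfix : ∀ x ∈ l, ∀ y, CycEdge l x y → y = f x := by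
    rintro x hx y ⟨i, hi, hix, hiy⟩
    have hx_eq : l[i]'hi = x := by
      rw [List.getElem?_eq_getElem hi] at hix
      exact Option.some.inj hix
    have hy_eq : l[(i + 1) % l.length]'(hmodlt i) = y := by
      rw [List.getElem?_eq_getElem (hmodlt i)] at hiy
      exact Option.some.inj hiy
    have hidxi : l.idxOf x = i := by
      have : l.get ⟨i, hi⟩ = x := hx_eq
      rw [← this]
      exact hgetidx ⟨i, hi⟩
    rw [hf_def]
    simp only [hidxi, List.get_eq_getElem]
    exact hy_eq.symm
  have hmemB : ∀ a ∈ l, a ∈ B1 ∨ a ∈ B2 := by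
    intro a ha
    rcases hedgef a ha with ⟨h, _, _⟩ | ⟨h, _, _⟩
    · exact Or.inl h
    · exact Or.inr h
  set X1 : Set α := {a | a ∈ l ∧ a ∈ B1} with hX1
  set X2 : Set α := {a | a ∈ l ∧ a ∈ B2} with hX2
  have hnB2 : ∀ a ∈ B1, a ∉ B2 := fun a h1 h2 => (hdisj.ne_of_mem h1 h2) rfl
  have hf1 : ∀ x ∈ X1, f x ∈ X2 ∧ M.IsBase (insert (f x) (B1 \ {x})) := by
    intro x hx
    rcases hedgef x hx.1 with ⟨_, hfB2, hb⟩ | ⟨hxB2, _, _⟩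
    · exact ⟨⟨hmeml x hx.1, hfB2⟩, hb⟩
    · exact absurd hxB2 (hnB2 x hx.2)
  have hf2 : ∀ x ∈ X2, f x ∈ X1 ∧ M.IsBase (insert (f x) (B2 \ {x})) := by
    intro x hx
    rcases hedgef x hx.1 with ⟨hxB1, _, _⟩ | ⟨_, hfB1, hb⟩
    · exact absurd hx.2 (hnB2 x hxB1)
    · exact ⟨⟨hmeml x hx.1, hfB1⟩, hb⟩
  -- predecessor: surjectivity
  have hpred : ∀ y ∈ l, ∃ x ∈ l, f x = y := by
    intro y hy
    have hj : l.idxOf y < l.length := hidx y hy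
    have hilt : (l.idxOf y + (l.length - 1)) % l.length < l.length := Nat.mod_lt _ hn0
    refine ⟨l.get ⟨_, hilt⟩, List.get_mem l _, ?_⟩
    rw [hf_def]
    simp only [hgetidx]
    have hmod : ((l.idxOf y + (l.length - 1)) % l.length + 1) % l.length = l.idxOf y := by
      rw [Nat.mod_add_mod]
      have h2 : l.idxOf y + (l.length - 1) + 1 = l.idxOf y + l.length := by omega
      rw [h2, Nat.add_mod_right, Nat.mod_eq_of_lt hj]
    have hfin : (⟨((l.idxOf y + (l.length - 1)) % l.length + 1) % l.length, hmodlt _⟩ :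
        Fin l.length) = ⟨l.idxOf y, hj⟩ := Fin.ext hmod
    rw [hfin]
    exact List.idxOf_get _
  have hsurj1 : ∀ y ∈ X2, ∃ x ∈ X1, f x = y := by
    intro y hy
    obtain ⟨x, hxl, hfx⟩ := hpred y hy.1
    rcases hedgef x hxl with ⟨hxB1, _, _⟩ | ⟨_, hfB1, _⟩
    · exact ⟨x, ⟨hxl, hxB1⟩, hfx⟩
    · rw [hfx] at hfB1
      exact absurd hy.2 (hnB2 y hfB1)
  have hsurj2 : ∀ y ∈ X1, ∃ x ∈ X2, f x = y := by
    intro y hy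
    obtain ⟨x, hxl, hfx⟩ := hpred y hy.1
    rcases hedgef x hxl with ⟨_, hfB2, _⟩ | ⟨hxB2, _, _⟩
    · rw [hfx] at hfB2
      exact absurd hfB2 (hnB2 y hy.2)
    · exact ⟨x, ⟨hxl, hxB2⟩, hfx⟩
  have hnon1 : ∀ x ∈ X1, ∀ y ∈ X2, y ≠ f x → ¬ M.IsBase (insert y (B1 \ {x})) := by
    intro x hx y hy hne' hb
    exact hne' (hcycfix x hx.1 y (hchordless x hx.1 y hy.1 (Or.inl ⟨hx.2, hy.2, hb⟩)))
  have hnon2 : ∀ x ∈ X2, ∀ y ∈ X1, y ≠ f x → ¬ M.IsBase (insert y (B2 \ {x})) := by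
    intro x hx y hy hne' hb
    exact hne' (hcycfix x hx.1 y (hchordless x hx.1 y hy.1 (Or.inr ⟨hx.2, hy.2, hb⟩)))
  have hbase1 : M.IsBase ((B1 \ X1) ∪ X2) :=
    exch_base M hB1 (fun a ha => ha.2)
      (Set.disjoint_left.mpr fun a ha haB1 => hnB2 a haB1 ha.2)
      (fun x hx => (hf1 x hx).1) hsurj1
      (fun x hx x' hx' h => hfinj x hx.1 x' hx'.1 h)
      (fun x hx => (hf1 x hx).2) hnon1
  have hbase2 : M.IsBase ((B2 \ X2) ∪ X1) :=
    exch_base M hB2 (fun a ha => ha.2)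
      (Set.disjoint_left.mpr fun a ha haB2 => hnB2 a ha.2 haB2)
      (fun x hx => (hf2 x hx).1) hsurj2
      (fun x hx x' hx' h => hfinj x hx.1 x' hx'.1 h)
      (fun x hx => (hf2 x hx).2) hnon2
  constructor
  · have hsd : symmDiff B1 {x | x ∈ l} = (B1 \ X1) ∪ X2 := by
      rw [Set.symmDiff_def]
      ext a
      simp only [Set.mem_union, Set.mem_diff, Set.mem_setOf_eq, hX1, hX2]
      constructor
      · rintro (⟨haB, hal⟩ | ⟨hal, haB⟩)
        · exact Or.inl ⟨haB, fun h => hal h.1⟩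
        · rcases hmemB a hal with h | h
          · exact absurd h haB
          · exact Or.inr ⟨hal, h⟩
      · rintro (⟨haB, hX⟩ | ⟨hal, haB2'⟩)
        · exact Or.inl ⟨haB, fun h => hX ⟨h, haB⟩⟩
        · exact Or.inr ⟨hal, fun h => hnB2 a h haB2'⟩
    rwa [hsd]
  · have hsd : symmDiff B2 {x | x ∈ l} = (B2 \ X2) ∪ X1 := by
      rw [Set.symmDiff_def]
      ext a
      simp only [Set.mem_union, Set.mem_diff, Set.mem_setOf_eq, hX1, hX2]
      constructor
      · rintro (⟨haB, hal⟩ | ⟨hal, haB⟩)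
        · exact Or.inl ⟨haB, fun h => hal h.1⟩
        · rcases hmemB a hal with h | h
          · exact Or.inr ⟨hal, h⟩
          · exact absurd h haB
      · rintro (⟨haB, hX⟩ | ⟨hal, haB1'⟩)
        · exact Or.inl ⟨haB, fun h => hX ⟨h, haB⟩⟩
        · exact Or.inr ⟨hal, fun h => hnB2 a haB1' h⟩
    rwa [hsd]
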